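/- Let G be a countably based infinite pro-p group with filtration series S: G = G_0 ⊇ G_1 ⊇ …, a closed normal subgroup N and a closed subgroup H. Suppose N has strong Hausdorff dimension ξ = hdim^S_G(N). Then hdim^S_G(H) ≥ (1−ξ)·hdim^{S|_{G/N}}_{G/N}(HN/N) + ξ·liminf_{i→∞} log_p|H G_i ∩ N : G_i ∩ N| / log_p|N : G_i ∩ N|, with equality if HN/N has strong Hausdorff dimension in G/N with respect to the induced filtration G_i N/N. -/

import Mathlib

open Filter

section Aux

private lemma aux_dedekind {G : Type*} [Group G] (M N K : Subgroup G) [M.Normal] (hMK : M ≤ K) :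
    (N ⊔ M) ⊓ K = (N ⊓ K) ⊔ M := by
  apply le_antisymm
  · intro g hg
    obtain ⟨hg1, hg2⟩ := Subgroup.mem_inf.mp hg
    rw [← SetLike.mem_coe, Subgroup.mul_normal] at hg1
    obtain ⟨n, hn, m, hm, rfl⟩ := hg1
    have hnK : n ∈ K := by
      have := K.mul_mem hg2 (K.inv_mem (hMK hm))
      simpa using this
    exact Subgroup.mul_mem _ (Subgroup.mem_sup_left (Subgroup.mem_inf.mpr ⟨hn, hnK⟩))
      (Subgroup.mem_sup_right hm)
  · exact sup_le (le_inf (le_trans inf_le_left le_sup_left) inf_le_right)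
      (le_inf le_sup_right hMK)

private lemma aux_relIndex {G : Type*} [Group G] (M N H : Subgroup G) [M.Normal] [N.Normal] :
    M.relIndex (H ⊔ M) = (M ⊓ N).relIndex ((H ⊔ M) ⊓ N) * (N ⊔ M).relIndex (H ⊔ N ⊔ M) ∧
    M.relIndex N * (N ⊔ M).index = M.index ∧
    (M ⊓ N).relIndex ((H ⊔ M) ⊓ N) ∣ M.relIndex N := by
  have hMK : M ≤ H ⊔ M := le_sup_right
  have hMP : M ≤ (N ⊓ (H ⊔ M)) ⊔ M := le_sup_right
  have hPK : (N ⊓ (H ⊔ M)) ⊔ M ≤ H ⊔ M := sup_le inf_le_right hMK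
  have h1 : M.relIndex ((N ⊓ (H ⊔ M)) ⊔ M) * ((N ⊓ (H ⊔ M)) ⊔ M).relIndex (H ⊔ M)
      = M.relIndex (H ⊔ M) := Subgroup.relIndex_mul_relIndex _ _ _ hMP hPK
  have h2 : M.relIndex ((N ⊓ (H ⊔ M)) ⊔ M) = (M ⊓ N).relIndex ((H ⊔ M) ⊓ N) := by
    rw [Subgroup.relIndex_sup_right (N ⊓ (H ⊔ M)) M, inf_comm N (H ⊔ M),
      ← Subgroup.inf_relIndex_right M ((H ⊔ M) ⊓ N), ← inf_assoc, inf_eq_left.mpr hMK]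
  have h3 : ((N ⊓ (H ⊔ M)) ⊔ M).relIndex (H ⊔ M) = (N ⊔ M).relIndex (H ⊔ N ⊔ M) := by
    haveI : (N ⊔ M).Normal := Subgroup.sup_normal N M
    have hsup : H ⊔ N ⊔ M = (H ⊔ M) ⊔ (N ⊔ M) := by
      rw [sup_assoc, sup_assoc, sup_comm M (N ⊔ M), sup_assoc, sup_idem]
    rw [hsup, Subgroup.relIndex_sup_right (H ⊔ M) (N ⊔ M),
      ← Subgroup.inf_relIndex_right (N ⊔ M) (H ⊔ M), aux_dedekind M N (H ⊔ M) hMK]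
  have h4 : M.relIndex N * (N ⊔ M).index = M.index := by
    have := Subgroup.relIndex_mul_index (show M ≤ N ⊔ M from le_sup_right)
    rwa [Subgroup.relIndex_sup_right N M] at this
  have h6 : (M ⊓ N).relIndex ((H ⊔ M) ⊓ N) * ((H ⊔ M) ⊓ N).relIndex N = (M ⊓ N).relIndex N :=
    Subgroup.relIndex_mul_relIndex _ _ _ (inf_le_inf_right N hMK) inf_le_right
  have h7 : (M ⊓ N).relIndex N = M.relIndex N := Subgroup.inf_relIndex_right M N
  refine ⟨by rw [← h1, h2, h3], h4, ⟨((H ⊔ M) ⊓ N).relIndex N, by rw [← h7, ← h6]⟩⟩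

private lemma aux_analysis (x z u v a : ℕ → ℝ) (ξ : ℝ)
    (hx0 : ∀ᶠ i in atTop, (0:ℝ) ≤ x i) (hx1 : ∀ᶠ i in atTop, x i ≤ 1)
    (hz0 : ∀ᶠ i in atTop, (0:ℝ) ≤ z i) (hz1 : ∀ᶠ i in atTop, z i ≤ 1)
    (hu0 : ∀ᶠ i in atTop, (0:ℝ) ≤ u i) (hv0 : ∀ᶠ i in atTop, (0:ℝ) ≤ v i)
    (hu : Tendsto u atTop (nhds (1 - ξ))) (hv : Tendsto v atTop (nhds ξ))
    (hae : ∀ᶠ i in atTop, a i = x i * u i + z i * v i) :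
    (liminf a atTop ≥ (1 - ξ) * liminf x atTop + ξ * liminf z atTop) ∧
    (Tendsto x atTop (nhds (liminf x atTop)) →
      liminf a atTop = (1 - ξ) * liminf x atTop + ξ * liminf z atTop) := by
  have hx0' : (0 : ℕ → ℝ) ≤ᶠ[atTop] x := hx0
  have hz0' : (0 : ℕ → ℝ) ≤ᶠ[atTop] z := hz0
  have hu0' : (0 : ℕ → ℝ) ≤ᶠ[atTop] u := hu0
  have hv0' : (0 : ℕ → ℝ) ≤ᶠ[atTop] v := hv0
  have hxbd : IsBoundedUnder (· ≤ ·) atTop x := isBoundedUnder_of_eventually_le hx1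
  have hxbd' : IsBoundedUnder (· ≥ ·) atTop x := isBoundedUnder_of_eventually_ge hx0
  have hzbd : IsBoundedUnder (· ≤ ·) atTop z := isBoundedUnder_of_eventually_le hz1
  have hzbd' : IsBoundedUnder (· ≥ ·) atTop z := isBoundedUnder_of_eventually_ge hz0
  have hubd : IsBoundedUnder (· ≤ ·) atTop u := hu.isBoundedUnder_le
  have hvbd : IsBoundedUnder (· ≤ ·) atTop v := hv.isBoundedUnder_le
  have hg0 : ∀ᶠ i in atTop, (0:ℝ) ≤ x i * u i :=
    (hx0.and hu0).mono fun i h => mul_nonneg h.1 h.2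
  have hh0 : ∀ᶠ i in atTop, (0:ℝ) ≤ z i * v i :=
    (hz0.and hv0).mono fun i h => mul_nonneg h.1 h.2
  have hgbd : IsBoundedUnder (· ≤ ·) atTop (fun i => x i * u i) :=
    isBoundedUnder_le_mul_of_nonneg hx0.frequently hxbd hu0' hubd
  have hhbd : IsBoundedUnder (· ≤ ·) atTop (fun i => z i * v i) :=
    isBoundedUnder_le_mul_of_nonneg hz0.frequently hzbd hv0' hvbd
  have hgbd' : IsBoundedUnder (· ≥ ·) atTop (fun i => x i * u i) :=
    isBoundedUnder_of_eventually_ge hg0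
  have hhbd' : IsBoundedUnder (· ≥ ·) atTop (fun i => z i * v i) :=
    isBoundedUnder_of_eventually_ge hh0
  have hgh : liminf a atTop
      = liminf ((fun i => x i * u i) + fun i => z i * v i) atTop :=
    liminf_congr (hae.mono fun i h => h)
  have key1 : liminf x atTop * (1 - ξ) ≤ liminf (fun i => x i * u i) atTop := by
    have := le_liminf_mul hx0' hxbd hu0' hubd.isCoboundedUnder_ge
    rw [hu.liminf_eq] at this
    exact this
  have key2 : liminf z atTop * ξ ≤ liminf (fun i => z i * v i) atTop := by
    have := le_liminf_mul hz0' hzbd hv0' hvbd.isCoboundedUnder_ge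
    rw [hv.liminf_eq] at this
    exact this
  have key3 : liminf (fun i => x i * u i) atTop + liminf (fun i => z i * v i) atTop ≤
      liminf ((fun i => x i * u i) + fun i => z i * v i) atTop :=
    le_liminf_add hgbd' hgbd hhbd' hhbd.isCoboundedUnder_ge
  have part1 : liminf a atTop ≥ (1 - ξ) * liminf x atTop + ξ * liminf z atTop := by
    rw [hgh]
    nlinarith [key1, key2, key3]
  refine ⟨part1, fun hxX => ?_⟩
  have hgt : Tendsto (fun i => x i * u i) atTop (nhds (liminf x atTop * (1 - ξ))) :=
    hxX.mul hu
  have h1 : liminf ((fun i => x i * u i) + fun i => z i * v i) atTop ≤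
      limsup (fun i => x i * u i) atTop + liminf (fun i => z i * v i) atTop :=
    liminf_add_le hgbd' hgbd hhbd' hhbd.isCoboundedUnder_ge
  have h2 : limsup (fun i => x i * u i) atTop = liminf x atTop * (1 - ξ) := hgt.limsup_eq
  have h3 : liminf (fun i => z i * v i) atTop ≤ ξ * liminf z atTop := by
    have hcomm : liminf (fun i => z i * v i) atTop = liminf (fun i => v i * z i) atTop :=
      liminf_congr (Eventually.of_forall fun i => mul_comm _ _)
    have := liminf_mul_le hv0' hvbd hz0' hzbd.isCoboundedUnder_ge
    rw [hv.limsup_eq] at this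
    rw [hcomm]
    exact this
  have upper : liminf a atTop ≤ (1 - ξ) * liminf x atTop + ξ * liminf z atTop := by
    rw [hgh]
    nlinarith [h1, h2, h3]
  linarith [part1, upper]

end Aux

/-- Let `G` be a countably based infinite pro-`p` group with filtration
series `S`, `N` a closed normal subgroup with strong Hausdorff dimension
`ξ = hdim^S_G(N)`, and `H` a closed subgroup.  Then
`hdim^S_G(H) ≥ (1−ξ)·hdim^{S|_{G/N}}_{G/N}(HN/N) + ξ·liminf_i log|H G_i ∩ N : G_i ∩ N|/log|N : G_i ∩ N|`,
with equality if `HN/N` has strong Hausdorff dimension in `G/N`.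

All quantities are expressed inside `G`:
`|HN·G_iN : G_iN| = (N ⊔ S i).relIndex (H ⊔ N ⊔ S i)`, `|G : G_i N| = (N ⊔ S i).index`,
`|H G_i ∩ N : G_i ∩ N| = (S i ⊓ N).relIndex ((H ⊔ S i) ⊓ N)`,
`|N : G_i ∩ N| = (S i).relIndex N`. -/
theorem stmt10 (p : ℕ) (hp : p.Prime)
    (G : Type*) [Group G] [TopologicalSpace G] [IsTopologicalGroup G]
    [CompactSpace G] [TotallyDisconnectedSpace G]
    [SecondCountableTopology G] [Infinite G]
    (hpro : ∀ U : Subgroup G, IsOpen ((U : Set G)) → ∃ n : ℕ, U.index = p ^ n)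
    (S : ℕ → Subgroup G) (hS0 : S 0 = ⊤) (hanti : Antitone S)
    (hopen : ∀ i, IsOpen ((S i : Set G))) (hnorm : ∀ i, (S i).Normal)
    (hint : ⨅ i, S i = ⊥)
    (N H : Subgroup G) [N.Normal]
    (hNcl : IsClosed ((N : Set G))) (hHcl : IsClosed ((H : Set G)))
    (ξ : ℝ)
    -- `N` has strong Hausdorff dimension `ξ` in `G` w.r.t. `S`:
    (hstrongN : Tendsto (fun i : ℕ =>
        Real.log (((S i).relIndex (N ⊔ S i) : ℕ)) / Real.log (((S i).index : ℕ)))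
      atTop (nhds ξ)) :
    (liminf (fun i : ℕ =>
        Real.log (((S i).relIndex (H ⊔ S i) : ℕ)) / Real.log (((S i).index : ℕ))) atTop ≥
      (1 - ξ) * liminf (fun i : ℕ =>
          Real.log (((N ⊔ S i).relIndex (H ⊔ N ⊔ S i) : ℕ)) /
            Real.log (((N ⊔ S i).index : ℕ))) atTop +
      ξ * liminf (fun i : ℕ =>
          Real.log (((S i ⊓ N).relIndex ((H ⊔ S i) ⊓ N) : ℕ)) /
            Real.log (((S i).relIndex N : ℕ))) atTop) ∧
    -- equality if `HN/N` has strong Hausdorff dimension in `G/N` w.r.t. `S|_{G/N}`: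
    (Tendsto (fun i : ℕ =>
        Real.log (((N ⊔ S i).relIndex (H ⊔ N ⊔ S i) : ℕ)) /
          Real.log (((N ⊔ S i).index : ℕ))) atTop
      (nhds (liminf (fun i : ℕ =>
        Real.log (((N ⊔ S i).relIndex (H ⊔ N ⊔ S i) : ℕ)) /
          Real.log (((N ⊔ S i).index : ℕ))) atTop)) →
      liminf (fun i : ℕ =>
        Real.log (((S i).relIndex (H ⊔ S i) : ℕ)) / Real.log (((S i).index : ℕ))) atTop =
      (1 - ξ) * liminf (fun i : ℕ =>
          Real.log (((N ⊔ S i).relIndex (H ⊔ N ⊔ S i) : ℕ)) /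
            Real.log (((N ⊔ S i).index : ℕ))) atTop +
      ξ * liminf (fun i : ℕ =>
          Real.log (((S i ⊓ N).relIndex ((H ⊔ S i) ⊓ N) : ℕ)) /
            Real.log (((S i).relIndex N : ℕ))) atTop) := by
  -- Natural number index identities
  have hDpos : ∀ i, 0 < (S i).index := fun i => by
    obtain ⟨n, hn⟩ := hpro (S i) (hopen i)
    rw [hn]; exact pow_pos hp.pos n
  have hkey : ∀ i, (S i).relIndex (H ⊔ S i)
      = ((S i ⊓ N).relIndex ((H ⊔ S i) ⊓ N)) * ((N ⊔ S i).relIndex (H ⊔ N ⊔ S i)) := fun i => by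
    haveI := hnorm i; exact (aux_relIndex (S i) N H).1
  have hkey2 : ∀ i, (S i).relIndex N * (N ⊔ S i).index = (S i).index := fun i => by
    haveI := hnorm i; exact (aux_relIndex (S i) N H).2.1
  have hCdvdF : ∀ i, (S i ⊓ N).relIndex ((H ⊔ S i) ⊓ N) ∣ (S i).relIndex N := fun i => by
    haveI := hnorm i; exact (aux_relIndex (S i) N H).2.2
  have hFrw : ∀ i, (S i).relIndex (N ⊔ S i) = (S i).relIndex N := fun i => by
    haveI := hnorm i; exact Subgroup.relIndex_sup_right N (S i)
  have hEpos : ∀ i, 0 < (N ⊔ S i).index := fun i =>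
    Nat.pos_of_ne_zero fun h => by
      have h2 := hkey2 i; rw [h, mul_zero] at h2; exact (hDpos i).ne' h2.symm
  have hFpos : ∀ i, 0 < (S i).relIndex N := fun i =>
    Nat.pos_of_ne_zero fun h => by
      have h2 := hkey2 i; rw [h, zero_mul] at h2; exact (hDpos i).ne' h2.symm
  have hAdvdD : ∀ i, (S i).relIndex (H ⊔ S i) ∣ (S i).index := fun i => by
    haveI := hnorm i; exact Subgroup.relIndex_dvd_index_of_normal _ _
  have hApos : ∀ i, 0 < (S i).relIndex (H ⊔ S i) := fun i =>
    Nat.pos_of_ne_zero fun h =>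
      (hDpos i).ne' (Nat.eq_zero_of_zero_dvd (h ▸ hAdvdD i))
  have hBpos : ∀ i, 0 < (N ⊔ S i).relIndex (H ⊔ N ⊔ S i) := fun i =>
    Nat.pos_of_ne_zero fun h => (hApos i).ne' (by rw [hkey i, h, mul_zero])
  have hCpos : ∀ i, 0 < (S i ⊓ N).relIndex ((H ⊔ S i) ⊓ N) := fun i =>
    Nat.pos_of_ne_zero fun h => (hApos i).ne' (by rw [hkey i, h, zero_mul])
  have hBdvdE : ∀ i, (N ⊔ S i).relIndex (H ⊔ N ⊔ S i) ∣ (N ⊔ S i).index := fun i => by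
    haveI := hnorm i
    haveI : (N ⊔ S i).Normal := Subgroup.sup_normal N (S i)
    exact Subgroup.relIndex_dvd_index_of_normal _ _
  have hEdvdD : ∀ i, (N ⊔ S i).index ∣ (S i).index := fun i =>
    ⟨(S i).relIndex N, by rw [← hkey2 i, Nat.mul_comm]⟩
  have hFdvdD : ∀ i, (S i).relIndex N ∣ (S i).index := fun i =>
    ⟨(N ⊔ S i).index, (hkey2 i).symm⟩
  -- eventual nontriviality
  obtain ⟨g, hg⟩ := exists_ne (1 : G)
  have hgnot : ¬ ∀ i, g ∈ S i := fun h => hg (by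
    have : g ∈ ⨅ i, S i := Subgroup.mem_iInf.mpr h
    rwa [hint, Subgroup.mem_bot] at this)
  push_neg at hgnot
  obtain ⟨i0, hi0⟩ := hgnot
  have hD2 : ∀ i, i0 ≤ i → 2 ≤ (S i).index := by
    intro i hi
    have hne : S i ≠ ⊤ := fun h => hi0 (hanti hi (by rw [h]; exact Subgroup.mem_top g))
    have h1 : (S i).index ≠ 1 := fun h => hne (Subgroup.index_eq_one.mp h)
    have := hDpos i
    omega
  -- convergence of v and u
  have hv : Tendsto (fun i : ℕ =>
      Real.log (((S i).relIndex N : ℕ)) / Real.log (((S i).index : ℕ)))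
      atTop (nhds ξ) := by
    apply hstrongN.congr
    intro i
    rw [hFrw i]
  have hu : Tendsto (fun i : ℕ =>
      Real.log (((N ⊔ S i).index : ℕ)) / Real.log (((S i).index : ℕ)))
      atTop (nhds (1 - ξ)) := by
    have h1 : Tendsto (fun i : ℕ =>
        1 - Real.log (((S i).relIndex N : ℕ)) / Real.log (((S i).index : ℕ)))
        atTop (nhds (1 - ξ)) := tendsto_const_nhds.sub hv
    apply h1.congr'
    filter_upwards [eventually_ge_atTop i0] with i hi
    have hgt1 : (1:ℝ) < (((S i).index : ℕ) : ℝ) := by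
      have := hD2 i hi
      exact_mod_cast (by omega : 1 < (S i).index)
    have hlogD : Real.log (((S i).index : ℕ)) ≠ 0 := (Real.log_pos hgt1).ne'
    have hmul : ((((S i).index : ℕ)) : ℝ)
        = ((((S i).relIndex N : ℕ)) : ℝ) * ((((N ⊔ S i).index : ℕ)) : ℝ) := by
      exact_mod_cast (hkey2 i).symm
    have hlogsum : Real.log (((S i).index : ℕ))
        = Real.log (((S i).relIndex N : ℕ)) + Real.log (((N ⊔ S i).index : ℕ)) := by
      rw [hmul, Real.log_mul (Nat.cast_ne_zero.mpr (hFpos i).ne')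
        (Nat.cast_ne_zero.mpr (hEpos i).ne')]
    have hE : Real.log (((N ⊔ S i).index : ℕ))
        = Real.log (((S i).index : ℕ)) - Real.log (((S i).relIndex N : ℕ)) := by
      rw [hlogsum]; ring
    rw [hE, sub_div, div_self hlogD]
  -- the pointwise decomposition
  have hae : ∀ᶠ i in atTop,
      Real.log (((S i).relIndex (H ⊔ S i) : ℕ)) / Real.log (((S i).index : ℕ))
      = (Real.log (((N ⊔ S i).relIndex (H ⊔ N ⊔ S i) : ℕ)) /
            Real.log (((N ⊔ S i).index : ℕ))) *
          (Real.log (((N ⊔ S i).index : ℕ)) / Real.log (((S i).index : ℕ)))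
        + (Real.log (((S i ⊓ N).relIndex ((H ⊔ S i) ⊓ N) : ℕ)) /
            Real.log (((S i).relIndex N : ℕ))) *
          (Real.log (((S i).relIndex N : ℕ)) / Real.log (((S i).index : ℕ))) := by
    apply Eventually.of_forall
    intro i
    have hcast : ((((S i).relIndex (H ⊔ S i) : ℕ)) : ℝ)
        = ((((S i ⊓ N).relIndex ((H ⊔ S i) ⊓ N) : ℕ)) : ℝ)
          * ((((N ⊔ S i).relIndex (H ⊔ N ⊔ S i) : ℕ)) : ℝ) := by
      exact_mod_cast hkey i
    have hlogA : Real.log (((S i).relIndex (H ⊔ S i) : ℕ))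
        = Real.log (((S i ⊓ N).relIndex ((H ⊔ S i) ⊓ N) : ℕ))
          + Real.log (((N ⊔ S i).relIndex (H ⊔ N ⊔ S i) : ℕ)) := by
      rw [hcast, Real.log_mul (Nat.cast_ne_zero.mpr (hCpos i).ne')
        (Nat.cast_ne_zero.mpr (hBpos i).ne')]
    have hterm1 : Real.log (((N ⊔ S i).relIndex (H ⊔ N ⊔ S i) : ℕ)) /
          Real.log (((S i).index : ℕ))
        = (Real.log (((N ⊔ S i).relIndex (H ⊔ N ⊔ S i) : ℕ)) /
            Real.log (((N ⊔ S i).index : ℕ))) *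
          (Real.log (((N ⊔ S i).index : ℕ)) / Real.log (((S i).index : ℕ))) := by
      rcases eq_or_ne ((N ⊔ S i).index) 1 with hE1 | hE1
      · have hB1 : (N ⊔ S i).relIndex (H ⊔ N ⊔ S i) = 1 :=
          Nat.dvd_one.mp (hE1 ▸ hBdvdE i)
        simp [hB1]
      · have h2 : (1:ℝ) < ((((N ⊔ S i).index : ℕ)) : ℝ) := by
          have := hEpos i
          exact_mod_cast (by omega : 1 < (N ⊔ S i).index)
        rw [div_mul_div_cancel₀ (Real.log_pos h2).ne']
    have hterm2 : Real.log (((S i ⊓ N).relIndex ((H ⊔ S i) ⊓ N) : ℕ)) /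
          Real.log (((S i).index : ℕ))
        = (Real.log (((S i ⊓ N).relIndex ((H ⊔ S i) ⊓ N) : ℕ)) /
            Real.log (((S i).relIndex N : ℕ))) *
          (Real.log (((S i).relIndex N : ℕ)) / Real.log (((S i).index : ℕ))) := by
      rcases eq_or_ne ((S i).relIndex N) 1 with hF1 | hF1
      · have hC1 : (S i ⊓ N).relIndex ((H ⊔ S i) ⊓ N) = 1 :=
          Nat.dvd_one.mp (hF1 ▸ hCdvdF i)
        simp [hC1]
      · have h2 : (1:ℝ) < ((((S i).relIndex N : ℕ)) : ℝ) := by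
          have := hFpos i
          exact_mod_cast (by omega : 1 < (S i).relIndex N)
        rw [div_mul_div_cancel₀ (Real.log_pos h2).ne']
    rw [hlogA, add_div, hterm1, hterm2]
    exact add_comm _ _
  -- bounds
  have hx0 : ∀ᶠ i in atTop, (0:ℝ) ≤
      Real.log (((N ⊔ S i).relIndex (H ⊔ N ⊔ S i) : ℕ)) /
        Real.log (((N ⊔ S i).index : ℕ)) :=
    Eventually.of_forall fun i =>
      div_nonneg (Real.log_natCast_nonneg _) (Real.log_natCast_nonneg _)
  have hx1 : ∀ᶠ i in atTop,
      Real.log (((N ⊔ S i).relIndex (H ⊔ N ⊔ S i) : ℕ)) /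
        Real.log (((N ⊔ S i).index : ℕ)) ≤ 1 :=
    Eventually.of_forall fun i =>
      div_le_one_of_le₀
        (Real.log_le_log (Nat.cast_pos.mpr (hBpos i))
          (Nat.cast_le.mpr (Nat.le_of_dvd (hEpos i) (hBdvdE i))))
        (Real.log_natCast_nonneg _)
  have hz0 : ∀ᶠ i in atTop, (0:ℝ) ≤
      Real.log (((S i ⊓ N).relIndex ((H ⊔ S i) ⊓ N) : ℕ)) /
        Real.log (((S i).relIndex N : ℕ)) :=
    Eventually.of_forall fun i =>
      div_nonneg (Real.log_natCast_nonneg _) (Real.log_natCast_nonneg _)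
  have hz1 : ∀ᶠ i in atTop,
      Real.log (((S i ⊓ N).relIndex ((H ⊔ S i) ⊓ N) : ℕ)) /
        Real.log (((S i).relIndex N : ℕ)) ≤ 1 :=
    Eventually.of_forall fun i =>
      div_le_one_of_le₀
        (Real.log_le_log (Nat.cast_pos.mpr (hCpos i))
          (Nat.cast_le.mpr (Nat.le_of_dvd (hFpos i) (hCdvdF i))))
        (Real.log_natCast_nonneg _)
  have hu0 : ∀ᶠ i in atTop, (0:ℝ) ≤
      Real.log (((N ⊔ S i).index : ℕ)) / Real.log (((S i).index : ℕ)) :=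
    Eventually.of_forall fun i =>
      div_nonneg (Real.log_natCast_nonneg _) (Real.log_natCast_nonneg _)
  have hv0 : ∀ᶠ i in atTop, (0:ℝ) ≤
      Real.log (((S i).relIndex N : ℕ)) / Real.log (((S i).index : ℕ)) :=
    Eventually.of_forall fun i =>
      div_nonneg (Real.log_natCast_nonneg _) (Real.log_natCast_nonneg _)
  exact aux_analysis _ _ _ _ _ ξ hx0 hx1 hz0 hz1 hu0 hv0 hu hv hae
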